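/- Let T(w) := ₁φ₁(0;Qq²;q,Qq²w) / ₁φ₁(0;Qq;q,Qqw) ∈ K[[w]] (under Q = q^ν, J_{ν+1}(z;q^{−1})/J_ν(z;q^{−1}) = (q^{ν+1}z/(q^{ν+1}−1))·T(z²)). Then T(w) admits the following two continued fraction expansions: (i) T(w) = 1/(1 − b_0 w − a_1 w/(1 − b_1 w − a_2 w/(1 − b_2 w − ⋯))) with b_n := Qq^{n+1}/(1 − Qq^{n+1}) and a_n := Q²q^{2n+1}/((1 − Qq^n)(1 − Qq^{n+1})) (so T is the moment generating function of orthogonal polynomials of type R_I); and (ii) T(w) = 1/(1 − λ'_1 w/(1 − λ'_2 w/(1 − λ'_3 w/(1 − ⋯)))) with λ'_{2i} := Q²q^{3i+1}/((1 − Qq^{2i})(1 − Qq^{2i+1})) and λ'_{2i+1} := Qq^{i+1}/((1 − Qq^{2i+1})(1 − Qq^{2i+2})) (so T is also the even-moment generating function of usual orthogonal polynomials). -/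

import Mathlib

noncomputable section

/-- `K`, the fraction field of `ℚ[q,Q]` (`Q` plays the role of `q^ν`). -/
abbrev K : Type := FractionRing (MvPolynomial (Fin 2) ℚ)

def qv : K := algebraMap (MvPolynomial (Fin 2) ℚ) K (MvPolynomial.X 0)
def Qv : K := algebraMap (MvPolynomial (Fin 2) ℚ) K (MvPolynomial.X 1)

/-- The q-Pochhammer symbol `(a;q)_n`. -/
def qPoch (a : K) (n : ℕ) : K := ∏ j ∈ Finset.range n, (1 - a * qv ^ j)

/-- `₁φ₁(0; c; q, α w)` as an element of `K[[w]]`: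
its `n`-th coefficient is `(−1)^n q^{n(n−1)/2} α^n / ((q;q)_n (c;q)_n)`. -/
def phiSeries (c α : K) : PowerSeries K :=
  PowerSeries.mk fun n =>
    (-1) ^ n * qv ^ (n * (n - 1) / 2) * α ^ n / (qPoch qv n * qPoch c n)

/-- `T(w) = ₁φ₁(0;Qq²;q,Qq²w) / ₁φ₁(0;Qq;q,Qqw)`; under `Q = q^ν` one has
`J_{ν+1}(z;q⁻¹)/J_ν(z;q⁻¹) = (q^{ν+1}z/(q^{ν+1}−1)) T(z²)`. -/
def T : PowerSeries K :=
  phiSeries (Qv * qv ^ 2) (Qv * qv ^ 2) * (phiSeries (Qv * qv) (Qv * qv))⁻¹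

/-- `b_n = Q q^{n+1}/(1 − Q q^{n+1})`. -/
def bSeq (n : ℕ) : K := Qv * qv ^ (n + 1) / (1 - Qv * qv ^ (n + 1))

/-- `a_n = Q² q^{2n+1}/((1 − Q q^n)(1 − Q q^{n+1}))`. -/
def aSeq (n : ℕ) : K :=
  Qv ^ 2 * qv ^ (2 * n + 1) / ((1 - Qv * qv ^ n) * (1 - Qv * qv ^ (n + 1)))

/-- `λ'_{2i} = Q²q^{3i+1}/((1 − Qq^{2i})(1 − Qq^{2i+1}))` and
`λ'_{2i+1} = Qq^{i+1}/((1 − Qq^{2i+1})(1 − Qq^{2i+2}))`. -/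
def lamSeq (n : ℕ) : K :=
  (if n % 2 = 0 then Qv ^ 2 * qv ^ (3 * (n / 2) + 1) else Qv * qv ^ (n / 2 + 1)) /
    ((1 - Qv * qv ^ n) * (1 - Qv * qv ^ (n + 1)))

/-- The depth-`N` convergent of the type `R_I` continued fraction
`1/(1 − b_0 w − a_1 w/(1 − b_1 w − a_2 w/(⋯ − a_N w/(1 − b_N w))))`:
`convR b a N k` is the tail starting with `b_{N-k}`, so the convergent is
`convR b a N N`. -/
def convR (b a : ℕ → K) (N : ℕ) : ℕ → PowerSeries K
  | 0 => (1 - PowerSeries.C (b N) * PowerSeries.X)⁻¹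
  | k + 1 =>
      (1 - PowerSeries.C (b (N - k - 1)) * PowerSeries.X -
          PowerSeries.C (a (N - k)) * PowerSeries.X * convR b a N k)⁻¹

/-- The depth-`N` convergent of the Stieltjes-type continued fraction
`1/(1 − λ_1 w/(1 − λ_2 w/(⋯ − λ_N w/1)))`: `convS λ N k` is the tail whose outermost
numerator is `λ_{N-k+1}` (with `convS λ N 0 = 1`), so the convergent is `convS λ N N`. -/
def convS (lam : ℕ → K) (N : ℕ) : ℕ → PowerSeries K
  | 0 => 1
  | k + 1 => (1 - PowerSeries.C (lam (N - k)) * PowerSeries.X * convS lam N k)⁻¹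

lemma inj : Function.Injective (algebraMap (MvPolynomial (Fin 2) ℚ) K) :=
  IsFractionRing.injective _ _

lemma one_sub_q_ne (m : ℕ) (hm : m ≠ 0) : (1 : K) - qv ^ m ≠ 0 := by
  intro h
  have h2 : (1 : MvPolynomial (Fin 2) ℚ) - MvPolynomial.X 0 ^ m = 0 := by
    apply inj; simpa [qv, map_sub, map_pow] using h
  have := congrArg MvPolynomial.constantCoeff h2
  simp [MvPolynomial.constantCoeff_X, zero_pow hm] at this

lemma one_sub_Qq_ne (m : ℕ) : (1 : K) - Qv * qv ^ m ≠ 0 := by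
  intro h
  have h2 : (1 : MvPolynomial (Fin 2) ℚ) - MvPolynomial.X 1 * MvPolynomial.X 0 ^ m = 0 := by
    apply inj; simpa [qv, Qv, map_sub, map_pow, map_mul] using h
  have := congrArg MvPolynomial.constantCoeff h2
  simp [MvPolynomial.constantCoeff_X] at this

lemma tri (n : ℕ) : (n + 1) * n / 2 = n * (n - 1) / 2 + n := by
  have h : (n + 1) * n = n * (n - 1) + 2 * n := by
    cases n with
    | zero => rfl
    | succ m => simp [Nat.succ_sub_one]; ring
  rw [h, Nat.add_mul_div_left _ _ (by norm_num : 0 < 2)]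

lemma qPoch_zero (a : K) : qPoch a 0 = 1 := by simp [qPoch]

lemma qPoch_succ (a : K) (n : ℕ) : qPoch a (n + 1) = qPoch a n * (1 - a * qv ^ n) :=
  Finset.prod_range_succ _ _

lemma qPoch_shift (a : K) (n : ℕ) :
    (1 - a) * qPoch (a * qv) n = qPoch a n * (1 - a * qv ^ n) := by
  rw [← qPoch_succ]
  simp only [qPoch]
  rw [Finset.prod_range_succ']
  simp only [pow_zero, mul_one]
  rw [mul_comm]
  congr 1
  exact Finset.prod_congr rfl fun j _ => by rw [pow_succ]; ring

lemma qPoch_q_ne (n : ℕ) : qPoch qv n ≠ 0 := by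
  rw [qPoch, Finset.prod_ne_zero_iff]
  intro j _
  have : qv * qv ^ j = qv ^ (j + 1) := by ring
  rw [this]
  exact one_sub_q_ne _ (Nat.succ_ne_zero j)

lemma qPoch_Qq_ne (m n : ℕ) : qPoch (Qv * qv ^ m) n ≠ 0 := by
  rw [qPoch, Finset.prod_ne_zero_iff]
  intro j _
  have : Qv * qv ^ m * qv ^ j = Qv * qv ^ (m + j) := by ring
  rw [this]
  exact one_sub_Qq_ne _

def co (c α : K) (n : ℕ) : K :=
  (-1) ^ n * qv ^ (n * (n - 1) / 2) * α ^ n / (qPoch qv n * qPoch c n)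

lemma qPoch_step (m n : ℕ) :
    qPoch (Qv * qv ^ (m + 1)) n =
      qPoch (Qv * qv ^ m) n * (1 - Qv * qv ^ m * qv ^ n) / (1 - Qv * qv ^ m) := by
  have h := qPoch_shift (Qv * qv ^ m) n
  have e : Qv * qv ^ m * qv = Qv * qv ^ (m + 1) := by ring
  rw [e] at h
  field_simp [one_sub_Qq_ne m]
  linear_combination h

lemma pow_tri (n : ℕ) : (qv : K) ^ ((n + 1) * (n + 1 - 1) / 2) = qv ^ (n * (n - 1) / 2) * qv ^ n := by
  rw [Nat.add_sub_cancel, tri, pow_add]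

set_option maxHeartbeats 1000000 in

lemma coR (k n : ℕ) :
    co (Qv * qv ^ (k + 1)) (Qv * qv ^ (k + 1)) (n + 1) =
      co (Qv * qv ^ (k + 2)) (Qv * qv ^ (k + 2)) (n + 1)
      - bSeq k * co (Qv * qv ^ (k + 2)) (Qv * qv ^ (k + 2)) n
      - aSeq (k + 1) * co (Qv * qv ^ (k + 3)) (Qv * qv ^ (k + 3)) n := by
  have h1 : (1 : K) - qv * (qv ^ n) ≠ 0 := by
    have := one_sub_q_ne (n + 1) (Nat.succ_ne_zero n)
    intro h; apply this; rw [← h]; ring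
  have h2 : (1 : K) - (Qv * qv ^ (k + 1)) * (qv ^ n) ≠ 0 := by
    have := one_sub_Qq_ne (k + 1 + n); intro h; apply this; rw [← h]; ring
  have h3 : (1 : K) - (Qv * qv ^ (k + 2)) * (qv ^ n) ≠ 0 := by
    have := one_sub_Qq_ne (k + 2 + n); intro h; apply this; rw [← h]; ring
  have h4 : (1 : K) - (Qv * qv ^ (k + 1)) ≠ 0 := one_sub_Qq_ne (k + 1)
  have h5 : (1 : K) - (Qv * qv ^ (k + 2)) ≠ 0 := one_sub_Qq_ne (k + 2)
  have hd : qPoch qv n ≠ 0 := qPoch_q_ne n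
  have hp : qPoch (Qv * qv ^ (k + 1)) n ≠ 0 := qPoch_Qq_ne (k + 1) n
  have hP2 : qPoch (Qv * qv ^ (k + 2)) n ≠ 0 := qPoch_Qq_ne (k + 2) n
  have hP3 : qPoch (Qv * qv ^ (k + 3)) n ≠ 0 := qPoch_Qq_ne (k + 3) n
  have e1 : (1 - (Qv * qv ^ (k + 1))) * qPoch (Qv * qv ^ (k + 2)) n = qPoch (Qv * qv ^ (k + 1)) n * (1 - (Qv * qv ^ (k + 1)) * (qv ^ n)) := by
    have h := qPoch_shift (Qv * qv ^ (k + 1)) n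
    rw [show (Qv * qv ^ (k + 1)) * qv = (Qv * qv ^ (k + 2)) by ring] at h
    exact h
  have e2 : (1 - (Qv * qv ^ (k + 2))) * qPoch (Qv * qv ^ (k + 3)) n = qPoch (Qv * qv ^ (k + 2)) n * (1 - (Qv * qv ^ (k + 2)) * (qv ^ n)) := by
    have h := qPoch_shift (Qv * qv ^ (k + 2)) n
    rw [show (Qv * qv ^ (k + 2)) * qv = (Qv * qv ^ (k + 3)) by ring] at h
    exact h
  have e3 : (1 - (Qv * qv ^ (k + 1))) * (1 - (Qv * qv ^ (k + 2))) * qPoch (Qv * qv ^ (k + 3)) n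
      = qPoch (Qv * qv ^ (k + 1)) n * (1 - (Qv * qv ^ (k + 1)) * (qv ^ n)) * (1 - (Qv * qv ^ (k + 2)) * (qv ^ n)) := by
    linear_combination (1 - (Qv * qv ^ (k + 1))) * e2 + (1 - (Qv * qv ^ (k + 2)) * (qv ^ n)) * e1
  set Dr : K := (qPoch qv n * (1 - qv * (qv ^ n))) * (qPoch (Qv * qv ^ (k + 1)) n * (1 - (Qv * qv ^ (k + 1)) * (qv ^ n))) * (1 - (Qv * qv ^ (k + 2)) * (qv ^ n))
      * (1 - (Qv * qv ^ (k + 1))) * (1 - (Qv * qv ^ (k + 2))) with hDr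
  have hDrne : Dr ≠ 0 :=
    mul_ne_zero (mul_ne_zero (mul_ne_zero (mul_ne_zero (mul_ne_zero hd h1)
      (mul_ne_zero hp h2)) h3) h4) h5
  have HA : co (Qv * qv ^ (k + 1)) (Qv * qv ^ (k + 1)) (n + 1) = (-(((-1) ^ n * qv ^ (n * (n - 1) / 2) * (Qv * qv ^ (k + 1)) ^ n) * (qv ^ n) * (Qv * qv ^ (k + 1)) * ((1 - (Qv * qv ^ (k + 2)) * qv ^ n) * (1 - (Qv * qv ^ (k + 1))) * (1 - (Qv * qv ^ (k + 2)))))) / Dr := by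
    simp only [co]
    rw [qPoch_succ qv n, qPoch_succ (Qv * qv ^ (k + 1)) n, pow_tri n,
      div_eq_div_iff (mul_ne_zero (mul_ne_zero hd h1) (mul_ne_zero hp h2)) hDrne, hDr]
    ring
  have HB : co (Qv * qv ^ (k + 2)) (Qv * qv ^ (k + 2)) (n + 1) = (-(((-1) ^ n * qv ^ (n * (n - 1) / 2) * (Qv * qv ^ (k + 1)) ^ n) * (qv ^ n) * (qv ^ n) * qv * (Qv * qv ^ (k + 1)) * ((1 - (Qv * qv ^ (k + 1))) * (1 - (Qv * qv ^ (k + 1))) * (1 - (Qv * qv ^ (k + 2)))))) / Dr := by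
    simp only [co]
    rw [qPoch_succ qv n, qPoch_succ (Qv * qv ^ (k + 2)) n, pow_tri n,
      div_eq_div_iff (mul_ne_zero (mul_ne_zero hd h1) (mul_ne_zero hP2 h3)) hDrne, hDr]
    linear_combination (((-1) ^ n * qv ^ (n * (n - 1) / 2) * (Qv * qv ^ (k + 1)) ^ n) * (qv ^ n) * (qv ^ n) * qv * (Qv * qv ^ (k + 1)) * (1 - (Qv * qv ^ (k + 1))) * (1 - (Qv * qv ^ (k + 2))) * (qPoch qv n) * (1 - qv * qv ^ n) * (1 - (Qv * qv ^ (k + 2)) * qv ^ n)) * e1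
  have HC : bSeq k * co (Qv * qv ^ (k + 2)) (Qv * qv ^ (k + 2)) n = (((-1) ^ n * qv ^ (n * (n - 1) / 2) * (Qv * qv ^ (k + 1)) ^ n) * (qv ^ n) * (Qv * qv ^ (k + 1)) * ((1 - qv * qv ^ n) * (1 - (Qv * qv ^ (k + 2)) * qv ^ n) * (1 - (Qv * qv ^ (k + 1))) * (1 - (Qv * qv ^ (k + 2))))) / Dr := by
    simp only [co, bSeq]
    rw [div_mul_div_comm,
      div_eq_div_iff (mul_ne_zero h4 (mul_ne_zero hd hP2)) hDrne, hDr]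
    linear_combination (-((((-1) ^ n * qv ^ (n * (n - 1) / 2) * (Qv * qv ^ (k + 1)) ^ n) * (qv ^ n) * (Qv * qv ^ (k + 1)) * ((1 - qv * qv ^ n) * (1 - (Qv * qv ^ (k + 2)) * qv ^ n) * (1 - (Qv * qv ^ (k + 1))) * (1 - (Qv * qv ^ (k + 2))))) * (qPoch qv n))) * e1
  have HD : aSeq (k + 1) * co (Qv * qv ^ (k + 3)) (Qv * qv ^ (k + 3)) n = (((-1) ^ n * qv ^ (n * (n - 1) / 2) * (Qv * qv ^ (k + 1)) ^ n) * (qv ^ n) * (qv ^ n) * qv * (Qv * qv ^ (k + 1)) * (Qv * qv ^ (k + 1)) * ((1 - qv * qv ^ n) * (1 - (Qv * qv ^ (k + 1))) * (1 - (Qv * qv ^ (k + 2))))) / Dr := by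
    simp only [co, aSeq]
    rw [div_mul_div_comm,
      div_eq_div_iff (mul_ne_zero (mul_ne_zero h4 h5) (mul_ne_zero hd hP3)) hDrne, hDr]
    linear_combination (-(((-1) ^ n * qv ^ (n * (n - 1) / 2) * (Qv * qv ^ (k + 1)) ^ n) * (qv ^ n) * (qv ^ n) * qv * (Qv * qv ^ (k + 1)) * (Qv * qv ^ (k + 1)) * (1 - qv * qv ^ n) * (1 - Qv * qv ^ (k + 1)) * (1 - Qv * qv ^ (k + 2)) * (qPoch qv n))) * e3
  rw [HA, HB, HC, HD, div_sub_div_same, div_sub_div_same, div_eq_div_iff hDrne hDrne]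
  ring

set_option maxHeartbeats 1000000 in

lemma coSe (i n : ℕ) :
    co (Qv * qv ^ (2 * i + 1)) (Qv * qv ^ (i + 1)) (n + 1) =
      co (Qv * qv ^ (2 * i + 2)) (Qv * qv ^ (i + 2)) (n + 1)
      - ((Qv * qv ^ (i + 1)) / ((1 - (Qv * qv ^ (2 * i + 1))) * (1 - (Qv * qv ^ (2 * i + 2))))) * co (Qv * qv ^ (2 * i + 3)) (Qv * qv ^ (i + 2)) n := by
  have h1 : (1 : K) - qv * (qv ^ n) ≠ 0 := by
    have := one_sub_q_ne (n + 1) (Nat.succ_ne_zero n)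
    intro h; apply this; rw [← h]; ring
  have h2 : (1 : K) - (Qv * qv ^ (2 * i + 1)) * (qv ^ n) ≠ 0 := by
    have := one_sub_Qq_ne (2 * i + 1 + n); intro h; apply this; rw [← h]; ring
  have h3 : (1 : K) - (Qv * qv ^ (2 * i + 2)) * (qv ^ n) ≠ 0 := by
    have := one_sub_Qq_ne (2 * i + 2 + n); intro h; apply this; rw [← h]; ring
  have h4 : (1 : K) - (Qv * qv ^ (2 * i + 1)) ≠ 0 := one_sub_Qq_ne (2 * i + 1)
  have h5 : (1 : K) - (Qv * qv ^ (2 * i + 2)) ≠ 0 := one_sub_Qq_ne (2 * i + 2)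
  have hd : qPoch qv n ≠ 0 := qPoch_q_ne n
  have hp : qPoch (Qv * qv ^ (2 * i + 1)) n ≠ 0 := qPoch_Qq_ne (2 * i + 1) n
  have hP2 : qPoch (Qv * qv ^ (2 * i + 2)) n ≠ 0 := qPoch_Qq_ne (2 * i + 2) n
  have hP3 : qPoch (Qv * qv ^ (2 * i + 3)) n ≠ 0 := qPoch_Qq_ne (2 * i + 3) n
  have e1 : (1 - (Qv * qv ^ (2 * i + 1))) * qPoch (Qv * qv ^ (2 * i + 2)) n = qPoch (Qv * qv ^ (2 * i + 1)) n * (1 - (Qv * qv ^ (2 * i + 1)) * (qv ^ n)) := by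
    have h := qPoch_shift (Qv * qv ^ (2 * i + 1)) n
    rw [show (Qv * qv ^ (2 * i + 1)) * qv = (Qv * qv ^ (2 * i + 2)) by ring] at h
    exact h
  have e2 : (1 - (Qv * qv ^ (2 * i + 2))) * qPoch (Qv * qv ^ (2 * i + 3)) n = qPoch (Qv * qv ^ (2 * i + 2)) n * (1 - (Qv * qv ^ (2 * i + 2)) * (qv ^ n)) := by
    have h := qPoch_shift (Qv * qv ^ (2 * i + 2)) n
    rw [show (Qv * qv ^ (2 * i + 2)) * qv = (Qv * qv ^ (2 * i + 3)) by ring] at h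
    exact h
  have e3 : (1 - (Qv * qv ^ (2 * i + 1))) * (1 - (Qv * qv ^ (2 * i + 2))) * qPoch (Qv * qv ^ (2 * i + 3)) n
      = qPoch (Qv * qv ^ (2 * i + 1)) n * (1 - (Qv * qv ^ (2 * i + 1)) * (qv ^ n)) * (1 - (Qv * qv ^ (2 * i + 2)) * (qv ^ n)) := by
    linear_combination (1 - (Qv * qv ^ (2 * i + 1))) * e2 + (1 - (Qv * qv ^ (2 * i + 2)) * (qv ^ n)) * e1
  set Dr : K := (qPoch qv n * (1 - qv * (qv ^ n))) * (qPoch (Qv * qv ^ (2 * i + 1)) n * (1 - (Qv * qv ^ (2 * i + 1)) * (qv ^ n))) * (1 - (Qv * qv ^ (2 * i + 2)) * (qv ^ n))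
      * (1 - (Qv * qv ^ (2 * i + 1))) * (1 - (Qv * qv ^ (2 * i + 2))) with hDr
  have hDrne : Dr ≠ 0 :=
    mul_ne_zero (mul_ne_zero (mul_ne_zero (mul_ne_zero (mul_ne_zero hd h1)
      (mul_ne_zero hp h2)) h3) h4) h5
  have HA : co (Qv * qv ^ (2 * i + 1)) (Qv * qv ^ (i + 1)) (n + 1) = (-(((-1) ^ n * qv ^ (n * (n - 1) / 2) * (Qv * qv ^ (i + 1)) ^ n) * (Qv * qv ^ (i + 1)) * (qv ^ n) * ((1 - (Qv * qv ^ (2 * i + 2)) * qv ^ n) * (1 - (Qv * qv ^ (2 * i + 1))) * (1 - (Qv * qv ^ (2 * i + 2)))))) / Dr := by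
    simp only [co]
    rw [qPoch_succ qv n, qPoch_succ (Qv * qv ^ (2 * i + 1)) n, pow_tri n,
      div_eq_div_iff (mul_ne_zero (mul_ne_zero hd h1) (mul_ne_zero hp h2)) hDrne, hDr]
    ring
  have HB : co (Qv * qv ^ (2 * i + 2)) (Qv * qv ^ (i + 2)) (n + 1) = (-(((-1) ^ n * qv ^ (n * (n - 1) / 2) * (Qv * qv ^ (i + 1)) ^ n) * (qv ^ n) * (qv ^ n) * qv * (Qv * qv ^ (i + 1)) * ((1 - (Qv * qv ^ (2 * i + 1))) * (1 - (Qv * qv ^ (2 * i + 1))) * (1 - (Qv * qv ^ (2 * i + 2)))))) / Dr := by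
    simp only [co]
    rw [qPoch_succ qv n, qPoch_succ (Qv * qv ^ (2 * i + 2)) n, pow_tri n,
      div_eq_div_iff (mul_ne_zero (mul_ne_zero hd h1) (mul_ne_zero hP2 h3)) hDrne, hDr]
    linear_combination (((-1) ^ n * qv ^ (n * (n - 1) / 2) * (Qv * qv ^ (i + 1)) ^ n) * (qv ^ n) * (qv ^ n) * qv * (Qv * qv ^ (i + 1)) * (1 - (Qv * qv ^ (2 * i + 1))) * (1 - (Qv * qv ^ (2 * i + 2))) * (qPoch qv n) * (1 - qv * (qv ^ n)) * (1 - (Qv * qv ^ (2 * i + 2)) * (qv ^ n))) * e1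
  have HD : ((Qv * qv ^ (i + 1)) / ((1 - (Qv * qv ^ (2 * i + 1))) * (1 - (Qv * qv ^ (2 * i + 2))))) * co (Qv * qv ^ (2 * i + 3)) (Qv * qv ^ (i + 2)) n = ((Qv * qv ^ (i + 1)) * ((-1) ^ n * qv ^ (n * (n - 1) / 2) * (Qv * qv ^ (i + 1)) ^ n) * (qv ^ n) * ((1 - qv * qv ^ n) * (1 - (Qv * qv ^ (2 * i + 1))) * (1 - (Qv * qv ^ (2 * i + 2))))) / Dr := by
    simp only [co]
    rw [div_mul_div_comm,
      div_eq_div_iff (mul_ne_zero (mul_ne_zero h4 h5) (mul_ne_zero hd hP3)) hDrne, hDr]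
    linear_combination (-((Qv * qv ^ (i + 1)) * ((-1) ^ n * qv ^ (n * (n - 1) / 2) * (Qv * qv ^ (i + 1)) ^ n) * (qv ^ n) * (1 - qv * (qv ^ n)) * (1 - (Qv * qv ^ (2 * i + 1))) * (1 - (Qv * qv ^ (2 * i + 2))) * (qPoch qv n))) * e3
  rw [HA, HB, HD, div_sub_div_same, div_eq_div_iff hDrne hDrne]
  ring

set_option maxHeartbeats 1000000 in

lemma coSo (i n : ℕ) :
    co (Qv * qv ^ (2 * i + 2)) (Qv * qv ^ (i + 2)) (n + 1) =
      co (Qv * qv ^ (2 * i + 3)) (Qv * qv ^ (i + 2)) (n + 1)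
      - ((Qv ^ 2 * qv ^ (3 * i + 4)) / ((1 - (Qv * qv ^ (2 * i + 2))) * (1 - (Qv * qv ^ (2 * i + 3))))) * co (Qv * qv ^ (2 * i + 4)) (Qv * qv ^ (i + 3)) n := by
  have h1 : (1 : K) - qv * (qv ^ n) ≠ 0 := by
    have := one_sub_q_ne (n + 1) (Nat.succ_ne_zero n)
    intro h; apply this; rw [← h]; ring
  have h2 : (1 : K) - (Qv * qv ^ (2 * i + 2)) * (qv ^ n) ≠ 0 := by
    have := one_sub_Qq_ne (2 * i + 2 + n); intro h; apply this; rw [← h]; ring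
  have h3 : (1 : K) - (Qv * qv ^ (2 * i + 3)) * (qv ^ n) ≠ 0 := by
    have := one_sub_Qq_ne (2 * i + 3 + n); intro h; apply this; rw [← h]; ring
  have h4 : (1 : K) - (Qv * qv ^ (2 * i + 2)) ≠ 0 := one_sub_Qq_ne (2 * i + 2)
  have h5 : (1 : K) - (Qv * qv ^ (2 * i + 3)) ≠ 0 := one_sub_Qq_ne (2 * i + 3)
  have hd : qPoch qv n ≠ 0 := qPoch_q_ne n
  have hp : qPoch (Qv * qv ^ (2 * i + 2)) n ≠ 0 := qPoch_Qq_ne (2 * i + 2) n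
  have hP2 : qPoch (Qv * qv ^ (2 * i + 3)) n ≠ 0 := qPoch_Qq_ne (2 * i + 3) n
  have hP3 : qPoch (Qv * qv ^ (2 * i + 4)) n ≠ 0 := qPoch_Qq_ne (2 * i + 4) n
  have e1 : (1 - (Qv * qv ^ (2 * i + 2))) * qPoch (Qv * qv ^ (2 * i + 3)) n = qPoch (Qv * qv ^ (2 * i + 2)) n * (1 - (Qv * qv ^ (2 * i + 2)) * (qv ^ n)) := by
    have h := qPoch_shift (Qv * qv ^ (2 * i + 2)) n
    rw [show (Qv * qv ^ (2 * i + 2)) * qv = (Qv * qv ^ (2 * i + 3)) by ring] at h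
    exact h
  have e2 : (1 - (Qv * qv ^ (2 * i + 3))) * qPoch (Qv * qv ^ (2 * i + 4)) n = qPoch (Qv * qv ^ (2 * i + 3)) n * (1 - (Qv * qv ^ (2 * i + 3)) * (qv ^ n)) := by
    have h := qPoch_shift (Qv * qv ^ (2 * i + 3)) n
    rw [show (Qv * qv ^ (2 * i + 3)) * qv = (Qv * qv ^ (2 * i + 4)) by ring] at h
    exact h
  have e3 : (1 - (Qv * qv ^ (2 * i + 2))) * (1 - (Qv * qv ^ (2 * i + 3))) * qPoch (Qv * qv ^ (2 * i + 4)) n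
      = qPoch (Qv * qv ^ (2 * i + 2)) n * (1 - (Qv * qv ^ (2 * i + 2)) * (qv ^ n)) * (1 - (Qv * qv ^ (2 * i + 3)) * (qv ^ n)) := by
    linear_combination (1 - (Qv * qv ^ (2 * i + 2))) * e2 + (1 - (Qv * qv ^ (2 * i + 3)) * (qv ^ n)) * e1
  set Dr : K := (qPoch qv n * (1 - qv * (qv ^ n))) * (qPoch (Qv * qv ^ (2 * i + 2)) n * (1 - (Qv * qv ^ (2 * i + 2)) * (qv ^ n))) * (1 - (Qv * qv ^ (2 * i + 3)) * (qv ^ n))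
      * (1 - (Qv * qv ^ (2 * i + 2))) * (1 - (Qv * qv ^ (2 * i + 3))) with hDr
  have hDrne : Dr ≠ 0 :=
    mul_ne_zero (mul_ne_zero (mul_ne_zero (mul_ne_zero (mul_ne_zero hd h1)
      (mul_ne_zero hp h2)) h3) h4) h5
  have HA : co (Qv * qv ^ (2 * i + 2)) (Qv * qv ^ (i + 2)) (n + 1) = (-(((-1) ^ n * qv ^ (n * (n - 1) / 2) * (Qv * qv ^ (i + 2)) ^ n) * (Qv * qv ^ (i + 2)) * (qv ^ n) * ((1 - (Qv * qv ^ (2 * i + 3)) * qv ^ n) * (1 - (Qv * qv ^ (2 * i + 2))) * (1 - (Qv * qv ^ (2 * i + 3)))))) / Dr := by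
    simp only [co]
    rw [qPoch_succ qv n, qPoch_succ (Qv * qv ^ (2 * i + 2)) n, pow_tri n,
      div_eq_div_iff (mul_ne_zero (mul_ne_zero hd h1) (mul_ne_zero hp h2)) hDrne, hDr]
    ring
  have HB : co (Qv * qv ^ (2 * i + 3)) (Qv * qv ^ (i + 2)) (n + 1) = (-(((-1) ^ n * qv ^ (n * (n - 1) / 2) * (Qv * qv ^ (i + 2)) ^ n) * (Qv * qv ^ (i + 2)) * (qv ^ n) * ((1 - (Qv * qv ^ (2 * i + 2))) * (1 - (Qv * qv ^ (2 * i + 2))) * (1 - (Qv * qv ^ (2 * i + 3)))))) / Dr := by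
    simp only [co]
    rw [qPoch_succ qv n, qPoch_succ (Qv * qv ^ (2 * i + 3)) n, pow_tri n,
      div_eq_div_iff (mul_ne_zero (mul_ne_zero hd h1) (mul_ne_zero hP2 h3)) hDrne, hDr]
    linear_combination (((-1) ^ n * qv ^ (n * (n - 1) / 2) * (Qv * qv ^ (i + 2)) ^ n) * (Qv * qv ^ (i + 2)) * (qv ^ n) * (1 - (Qv * qv ^ (2 * i + 2))) * (1 - (Qv * qv ^ (2 * i + 3))) * (qPoch qv n) * (1 - qv * (qv ^ n)) * (1 - (Qv * qv ^ (2 * i + 3)) * (qv ^ n))) * e1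
  have HD : ((Qv ^ 2 * qv ^ (3 * i + 4)) / ((1 - (Qv * qv ^ (2 * i + 2))) * (1 - (Qv * qv ^ (2 * i + 3))))) * co (Qv * qv ^ (2 * i + 4)) (Qv * qv ^ (i + 3)) n = ((Qv ^ 2 * qv ^ (3 * i + 4)) * ((-1) ^ n * qv ^ (n * (n - 1) / 2) * (Qv * qv ^ (i + 2)) ^ n) * (qv ^ n) * ((1 - qv * qv ^ n) * (1 - (Qv * qv ^ (2 * i + 2))) * (1 - (Qv * qv ^ (2 * i + 3))))) / Dr := by
    simp only [co]
    rw [div_mul_div_comm,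
      div_eq_div_iff (mul_ne_zero (mul_ne_zero h4 h5) (mul_ne_zero hd hP3)) hDrne, hDr]
    linear_combination (-((Qv ^ 2 * qv ^ (3 * i + 4)) * ((-1) ^ n * qv ^ (n * (n - 1) / 2) * (Qv * qv ^ (i + 2)) ^ n) * (qv ^ n) * (1 - qv * (qv ^ n)) * (1 - (Qv * qv ^ (2 * i + 2))) * (1 - (Qv * qv ^ (2 * i + 3))) * (qPoch qv n))) * e3
  rw [HA, HB, HD, div_sub_div_same, div_eq_div_iff hDrne hDrne]
  ring

lemma coeff_phi (c α : K) (n : ℕ) :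
    PowerSeries.coeff n (phiSeries c α) = co c α n := by
  simp [phiSeries, co, PowerSeries.coeff_mk]

lemma co_zero (c α : K) : co c α 0 = 1 := by
  simp [co, qPoch_zero]

lemma constantCoeff_phi (c α : K) :
    PowerSeries.constantCoeff (phiSeries c α) = 1 := by
  rw [← PowerSeries.coeff_zero_eq_constantCoeff_apply, coeff_phi, co_zero]

def FR (m : ℕ) : PowerSeries K := phiSeries (Qv * qv ^ (m + 1)) (Qv * qv ^ (m + 1))

def HSer (m : ℕ) : PowerSeries K :=
  phiSeries (Qv * qv ^ (m + 1)) (Qv * qv ^ (m / 2 + 1 + m % 2))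

lemma FR_rec (m : ℕ) :
    FR m = FR (m + 1) - PowerSeries.C (bSeq m) * PowerSeries.X * FR (m + 1)
      - PowerSeries.C (aSeq (m + 1)) * PowerSeries.X * FR (m + 2) := by
  ext n
  rw [map_sub, map_sub]
  cases n with
  | zero =>
    simp [FR, PowerSeries.coeff_zero_eq_constantCoeff_apply, constantCoeff_phi,
      PowerSeries.constantCoeff_X, mul_assoc]
  | succ n =>
    rw [mul_assoc, mul_assoc, PowerSeries.coeff_C_mul, PowerSeries.coeff_C_mul,
      PowerSeries.coeff_succ_X_mul, PowerSeries.coeff_succ_X_mul]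
    simp only [FR, coeff_phi]
    exact coR m n

lemma HS_rec (m : ℕ) :
    HSer m = HSer (m + 1) - PowerSeries.C (lamSeq (m + 1)) * PowerSeries.X * HSer (m + 2) := by
  ext n
  rw [map_sub]
  cases n with
  | zero =>
    simp [HSer, PowerSeries.coeff_zero_eq_constantCoeff_apply, constantCoeff_phi,
      PowerSeries.constantCoeff_X, mul_assoc]
  | succ n =>
    rw [mul_assoc, PowerSeries.coeff_C_mul, PowerSeries.coeff_succ_X_mul]
    simp only [HSer, coeff_phi]
    rcases Nat.even_or_odd m with h | h
    · obtain ⟨i, rfl⟩ := h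
      have a1 : i + i + 1 = 2 * i + 1 := by omega
      have a2 : (i + i) / 2 + 1 + (i + i) % 2 = i + 1 := by omega
      have a3 : i + i + 1 + 1 = 2 * i + 2 := by omega
      have a4 : (i + i + 1) / 2 + 1 + (i + i + 1) % 2 = i + 2 := by omega
      have a5 : i + i + 2 + 1 = 2 * i + 3 := by omega
      have a6 : (i + i + 2) / 2 + 1 + (i + i + 2) % 2 = i + 2 := by omega
      have a7 : lamSeq (i + i + 1) = Qv * qv ^ (i + 1) /
          ((1 - Qv * qv ^ (2 * i + 1)) * (1 - Qv * qv ^ (2 * i + 2))) := by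
        rw [lamSeq, if_neg (by omega), show (i + i + 1) / 2 + 1 = i + 1 by omega,
          a1, show 2 * i + 1 + 1 = 2 * i + 2 by omega]
      rw [a2, a4, a6, a7, a5, a1, show 2 * i + 1 + 1 = 2 * i + 2 by omega]
      exact coSe i n
    · obtain ⟨i, rfl⟩ := h
      have a1 : 2 * i + 1 + 1 = 2 * i + 2 := by omega
      have a2 : (2 * i + 1) / 2 + 1 + (2 * i + 1) % 2 = i + 2 := by omega
      have a3 : 2 * i + 1 + 1 + 1 = 2 * i + 3 := by omega
      have a4 : (2 * i + 1 + 1) / 2 + 1 + (2 * i + 1 + 1) % 2 = i + 2 := by omega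
      have a5 : 2 * i + 1 + 2 + 1 = 2 * i + 4 := by omega
      have a6 : (2 * i + 1 + 2) / 2 + 1 + (2 * i + 1 + 2) % 2 = i + 3 := by omega
      have a7 : lamSeq (2 * i + 1 + 1) = Qv ^ 2 * qv ^ (3 * i + 4) /
          ((1 - Qv * qv ^ (2 * i + 2)) * (1 - Qv * qv ^ (2 * i + 3))) := by
        rw [lamSeq, if_pos (by omega), show (2 * i + 1 + 1) / 2 = i + 1 by omega,
          show 3 * (i + 1) + 1 = 3 * i + 4 by omega, a1,
          show 2 * i + 2 + 1 = 2 * i + 3 by omega]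
      rw [a2, a4, a6, a7, a5, a1, show 2 * i + 2 + 1 = 2 * i + 3 by omega]
      exact coSo i n

open PowerSeries

lemma dvd_sub_inv {m : ℕ} {A B : K⟦X⟧} (hA : constantCoeff A ≠ 0)
    (hB : constantCoeff B ≠ 0) (h : (X : K⟦X⟧) ^ m ∣ A - B) :
    (X : K⟦X⟧) ^ m ∣ A⁻¹ - B⁻¹ := by
  have key : A⁻¹ - B⁻¹ = A⁻¹ * (B - A) * B⁻¹ := by
    have h1 : A * A⁻¹ = 1 := PowerSeries.mul_inv_cancel A hA
    have h2 : B * B⁻¹ = 1 := PowerSeries.mul_inv_cancel B hB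
    calc A⁻¹ - B⁻¹ = A⁻¹ * (B * B⁻¹) - (A * A⁻¹) * B⁻¹ := by rw [h1, h2]; ring
    _ = A⁻¹ * (B - A) * B⁻¹ := by ring
  rw [key]
  have : (X : K⟦X⟧) ^ m ∣ B - A := by
    have := dvd_neg.mpr h
    simpa using this
  exact ((this.mul_left _).mul_right _)

open PowerSeries

lemma ratio_eq (F : ℕ → K⟦X⟧) (u v : ℕ → K)
    (h0 : ∀ m, constantCoeff (F m) = 1)
    (hrec : ∀ m, F m = F (m + 1) - C (u m) * X * F (m + 1) - C (v m) * X * F (m + 2))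
    (m : ℕ) :
    F (m + 1) * (F m)⁻¹
      = (1 - C (u m) * X - C (v m) * X * (F (m + 2) * (F (m + 1))⁻¹))⁻¹ := by
  have h1ne : constantCoeff (F (m + 1)) ≠ 0 := by rw [h0]; exact one_ne_zero
  have key : (F (m + 2) * (F (m + 1))⁻¹) * F (m + 1) = F (m + 2) := by
    rw [mul_assoc, PowerSeries.inv_mul_cancel _ h1ne, mul_one]
  have hM : F m = (1 - C (u m) * X - C (v m) * X * (F (m + 2) * (F (m + 1))⁻¹))
      * F (m + 1) := by
    rw [hrec m]
    linear_combination (C (v m) * X) * key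
  rw [hM, PowerSeries.mul_inv_rev, ← mul_assoc, PowerSeries.mul_inv_cancel _ h1ne, one_mul]

open PowerSeries

lemma constFR (m : ℕ) : constantCoeff (FR m) = 1 := constantCoeff_phi _ _

lemma constHS (m : ℕ) : constantCoeff (HSer m) = 1 := constantCoeff_phi _ _

lemma constM (b a : K) (G : K⟦X⟧) :
    constantCoeff (1 - C b * X - C a * X * G) = 1 := by
  simp [mul_assoc, PowerSeries.constantCoeff_X]

lemma ratioFR (m : ℕ) :
    FR (m + 1) * (FR m)⁻¹
      = (1 - C (bSeq m) * X
          - C (aSeq (m + 1)) * X * (FR (m + 2) * (FR (m + 1))⁻¹))⁻¹ :=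
  ratio_eq FR bSeq (fun m => aSeq (m + 1)) constFR (fun m => FR_rec m) m

lemma ratioHS (m : ℕ) :
    HSer (m + 1) * (HSer m)⁻¹
      = (1 - C (lamSeq (m + 1)) * X * (HSer (m + 2) * (HSer (m + 1))⁻¹))⁻¹ := by
  have h := ratio_eq HSer (fun _ => 0) (fun m => lamSeq (m + 1)) constHS
    (fun m => by rw [HS_rec m]; simp) m
  simpa using h

lemma constInvM (b a : K) (G : K⟦X⟧) :
    constantCoeff ((1 - C b * X - C a * X * G)⁻¹) = 1 := by
  rw [PowerSeries.constantCoeff_inv, constM, inv_one]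

lemma convR_dvd (N : ℕ) : ∀ j, j ≤ N →
    (X : K⟦X⟧) ^ (j + 1) ∣ (FR (N - j + 1) * (FR (N - j))⁻¹) - convR bSeq aSeq N j := by
  intro j
  induction j with
  | zero =>
    intro _
    simp only [Nat.sub_zero, convR]
    rw [ratioFR N]
    have hc2 : constantCoeff (1 - C (bSeq N) * X) ≠ 0 := by
      have := constM (bSeq N) 0 (0 : K⟦X⟧)
      simp only [mul_zero, sub_zero] at this
      rw [show (1 - C (bSeq N) * X : K⟦X⟧)
          = 1 - C (bSeq N) * X - C (0 : K) * X * 0 by simp, constM]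
      exact one_ne_zero
    apply dvd_sub_inv (by rw [constM]; exact one_ne_zero) hc2
    rw [pow_one]
    have : (1 - C (bSeq N) * X
        - C (aSeq (N + 1)) * X * (FR (N + 2) * (FR (N + 1))⁻¹))
        - (1 - C (bSeq N) * X)
        = -(C (aSeq (N + 1)) * (X * (FR (N + 2) * (FR (N + 1))⁻¹))) := by ring
    rw [this]
    exact (Dvd.dvd.mul_left (dvd_mul_right X _) _).neg_right
  | succ j ih =>
    intro hj
    have hjN : j ≤ N := by omega
    have e1 : N - (j + 1) + 1 = N - j := by omega
    have e2 : N - (j + 1) + 2 = N - j + 1 := by omega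
    have e3 : N - (j + 1) = N - j - 1 := by omega
    have e4 : N - j - 1 + 1 = N - j := by omega
    simp only [convR]
    have e5 : N - j - 1 + 2 = N - j + 1 := by omega
    rw [e3, ratioFR (N - j - 1), e4, e5]
    apply dvd_sub_inv (by rw [constM]; exact one_ne_zero) (by rw [constM]; exact one_ne_zero)
    have hdiff : (1 - C (bSeq (N - j - 1)) * X
        - C (aSeq (N - j)) * X * (FR (N - j + 1) * (FR (N - j))⁻¹))
        - (1 - C (bSeq (N - j - 1)) * X
            - C (aSeq (N - j)) * X * convR bSeq aSeq N j)
        = -(C (aSeq (N - j)) *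
            (X * ((FR (N - j + 1) * (FR (N - j))⁻¹) - convR bSeq aSeq N j))) := by
      ring
    rw [hdiff, pow_succ']
    exact ((mul_dvd_mul_left X (ih hjN)).mul_left _).neg_right

lemma constMS (a : K) (G : K⟦X⟧) :
    constantCoeff (1 - C a * X * G) = 1 := by
  simp [mul_assoc, PowerSeries.constantCoeff_X]

lemma convS_dvd (N : ℕ) : ∀ j, j ≤ N →
    (X : K⟦X⟧) ^ (j + 1) ∣ (HSer (N - j + 1) * (HSer (N - j))⁻¹) - convS lamSeq N j := by
  intro j
  induction j with
  | zero =>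
    intro _
    simp only [Nat.sub_zero, convS, zero_add, pow_one]
    rw [X_dvd_iff, map_sub, map_mul, PowerSeries.constantCoeff_inv, constHS, constHS]
    simp
  | succ j ih =>
    intro hj
    have hjN : j ≤ N := by omega
    have e3 : N - (j + 1) = N - j - 1 := by omega
    have e4 : N - j - 1 + 1 = N - j := by omega
    have e5 : N - j - 1 + 2 = N - j + 1 := by omega
    simp only [convS]
    rw [e3, ratioHS (N - j - 1), e4, e5]
    apply dvd_sub_inv (by rw [constMS]; exact one_ne_zero) (by rw [constMS]; exact one_ne_zero)
    have hdiff : (1 - C (lamSeq (N - j)) * X * (HSer (N - j + 1) * (HSer (N - j))⁻¹))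
        - (1 - C (lamSeq (N - j)) * X * convS lamSeq N j)
        = -(C (lamSeq (N - j)) *
            (X * ((HSer (N - j + 1) * (HSer (N - j))⁻¹) - convS lamSeq N j))) := by
      ring
    rw [hdiff, pow_succ']
    exact ((mul_dvd_mul_left X (ih hjN)).mul_left _).neg_right

lemma T_FR : T = FR 1 * (FR 0)⁻¹ := by
  have h1 : FR 1 = phiSeries (Qv * qv ^ 2) (Qv * qv ^ 2) := by norm_num [FR]
  have h0 : FR 0 = phiSeries (Qv * qv) (Qv * qv) := by norm_num [FR, pow_one]
  rw [T, h1, h0]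

lemma T_HS : T = HSer 1 * (HSer 0)⁻¹ := by
  have h1 : HSer 1 = phiSeries (Qv * qv ^ 2) (Qv * qv ^ 2) := by norm_num [HSer]
  have h0 : HSer 0 = phiSeries (Qv * qv) (Qv * qv) := by norm_num [HSer, pow_one]
  rw [T, h1, h0]

/-- Theorem 6.5 (two continued fraction expansions of the ratio of Hahn–Exton `q`-Bessel
functions): `T(w)` equals both the type `R_I` continued fraction with data `(b, a)` and
the Stieltjes continued fraction with data `λ'`, in the sense that for every `N ≥ 1` the
depth-`N` convergent agrees with `T` modulo `w^N`. -/
theorem hahn_exton_two_continued_fractions :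
    (∀ N : ℕ, 1 ≤ N → ∀ i < N,
      PowerSeries.coeff i T = PowerSeries.coeff i (convR bSeq aSeq N N)) ∧
    (∀ N : ℕ, 1 ≤ N → ∀ i < N,
      PowerSeries.coeff i T = PowerSeries.coeff i (convS lamSeq N N)) := by
  constructor
  · intro N _ i hiN
    have h := convR_dvd N N le_rfl
    simp only [Nat.sub_self, zero_add] at h
    rw [PowerSeries.X_pow_dvd_iff] at h
    have h2 := h i (by omega)
    rw [map_sub, ← T_FR] at h2
    exact sub_eq_zero.mp h2
  · intro N _ i hiN
    have h := convS_dvd N N le_rfl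
    simp only [Nat.sub_self, zero_add] at h
    rw [PowerSeries.X_pow_dvd_iff] at h
    have h2 := h i (by omega)
    rw [map_sub, ← T_HS] at h2
    exact sub_eq_zero.mp h2

end
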